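/- Let X = 2ℕ = {2, 4, 6, …} be the set of positive even integers. For all n ≥ 1 and s ≥ 0, the number P_{2n,s}^{X} of permutations of {1,…,2n} with exactly s descents whose top is even equals (n!)² · C(n,s)². -/

import Mathlib

open scoped Classical
open Finset

/-- Number of `X,Y`-descents of the word `w = w_1 ⋯ w_n` (indices `i` with
`w_i > w_{i+1}`, `w_i ∈ X`, `w_{i+1} ∈ Y`). -/
noncomputable def desXY (X Y : Set ℕ) {n : ℕ} (w : Fin n → ℕ) : ℕ :=
  (Finset.univ.filter (fun i : Fin n =>
    ∃ h : i.1 + 1 < n, w i > w ⟨i.1 + 1, h⟩ ∧ w i ∈ X ∧ w ⟨i.1 + 1, h⟩ ∈ Y)).card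

/-- `permCount X Y n s` is the number of permutations `σ` of `{1,…,n}` with
exactly `s` `X,Y`-descents. -/
noncomputable def permCount (X Y : Set ℕ) (n s : ℕ) : ℕ :=
  (Finset.univ.filter (fun σ : Equiv.Perm (Fin n) =>
    desXY X Y (fun i => (σ i : ℕ) + 1) = s)).card

/-- `α_{S,n,j} = |{x : j < x ≤ n, x ∉ S}|`. -/
noncomputable def alphaSet (S : Set ℕ) (n j : ℕ) : ℕ :=
  ((Finset.Ioc j n).filter (fun x => x ∉ S)).card

/-- `β_{S,n,j} = |{x : 1 ≤ x < j, x ∉ S}|`. -/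
noncomputable def betaSet (S : Set ℕ) (j : ℕ) : ℕ :=
  ((Finset.Ico 1 j).filter (fun x => x ∉ S)).card

def Xe : Set ℕ := {x : ℕ | 0 < x ∧ 2 ∣ x}

lemma desXY_card (m : ℕ) (w : Fin m → ℕ) (w' : ℕ → ℕ)
    (hw : ∀ (i : ℕ) (h : i < m), w' i = w ⟨i, h⟩) :
    desXY Xe Set.univ w
      = ((range (m - 1)).filter (fun i => w' (i + 1) < w' i ∧ w' i ∈ Xe)).card := by
  unfold desXY
  apply Finset.card_bij (fun (i : Fin m) _ => i.1)
  · intro a ha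
    simp only [Finset.mem_filter, Finset.mem_univ, true_and] at ha
    obtain ⟨h, hlt, hX, -⟩ := ha
    have e1 : w' a.1 = w a := by rw [hw a.1 a.isLt]
    have e2 : w' (a.1 + 1) = w ⟨a.1 + 1, h⟩ := hw (a.1+1) h
    simp only [Finset.mem_filter, Finset.mem_range, e1, e2]
    exact ⟨by omega, hlt, hX⟩
  · intro a ha b hb hab
    exact Fin.ext hab
  · intro b hb
    simp only [Finset.mem_filter, Finset.mem_range] at hb
    obtain ⟨hb1, hlt, hX⟩ := hb
    have hbm : b < m := by omega
    refine ⟨⟨b, hbm⟩, ?_, rfl⟩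
    simp only [Finset.mem_filter, Finset.mem_univ, true_and]
    refine ⟨by omega, ?_, ?_, trivial⟩
    · rw [← hw b hbm, ← hw (b+1) (by omega)]; exact hlt
    · rw [← hw b hbm]; exact hX

noncomputable def ins {m : ℕ} (p : Fin (m+1)) (τ : Equiv.Perm (Fin m)) : Equiv.Perm (Fin (m+1)) :=
  (finSuccEquiv' p).trans ((Equiv.optionCongr τ).trans (finSuccEquiv' (Fin.last m)).symm)

lemma ins_at {m : ℕ} (p : Fin (m+1)) (τ : Equiv.Perm (Fin m)) : ins p τ p = Fin.last m := by
  simp [ins]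

lemma ins_succAbove {m : ℕ} (p : Fin (m+1)) (τ : Equiv.Perm (Fin m)) (j : Fin m) :
    ins p τ (p.succAbove j) = Fin.castSucc (τ j) := by
  simp [ins, Fin.succAbove_last]

lemma ins_lt {m : ℕ} (p : Fin (m+1)) (τ : Equiv.Perm (Fin m)) (i : Fin (m+1))
    (h : i.1 < p.1) (h' : i.1 < m) : (ins p τ i : ℕ) = τ ⟨i.1, h'⟩ := by
  have key : i = p.succAbove ⟨i.1, h'⟩ := by
    rw [Fin.succAbove_of_castSucc_lt]
    · exact Fin.ext rfl
    · rw [Fin.lt_def, Fin.coe_castSucc]; exact h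
  calc (ins p τ i : ℕ) = ((ins p τ (p.succAbove ⟨i.1, h'⟩)) : ℕ) := by rw [← key]
    _ = _ := by rw [ins_succAbove]; simp

lemma ins_gt {m : ℕ} (p : Fin (m+1)) (τ : Equiv.Perm (Fin m)) (i : Fin (m+1))
    (h : p.1 < i.1) (h' : i.1 - 1 < m) : (ins p τ i : ℕ) = τ ⟨i.1 - 1, h'⟩ := by
  have key : i = p.succAbove ⟨i.1 - 1, h'⟩ := by
    rw [Fin.succAbove_of_le_castSucc]
    · exact Fin.ext (by simp [Fin.succ]; omega)
    · simp only [Fin.le_def, Fin.coe_castSucc]; omega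
  calc (ins p τ i : ℕ) = ((ins p τ (p.succAbove ⟨i.1 - 1, h'⟩)) : ℕ) := by rw [← key]
    _ = _ := by rw [ins_succAbove]; simp

lemma ins_injective (m : ℕ) : Function.Injective
    (fun pt : Fin (m+1) × Equiv.Perm (Fin m) => ins pt.1 pt.2) := by
  rintro ⟨p, τ⟩ ⟨p', τ'⟩ h
  simp only at h
  have hp : p = p' := by
    by_contra hne
    obtain ⟨j, hj⟩ := Fin.exists_succAbove_eq hne
    have h1 : ins p τ p = Fin.last m := ins_at p τ
    have h2 : ins p' τ' (p'.succAbove j) = Fin.castSucc (τ' j) := ins_succAbove p' τ' j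
    rw [hj, ← h, h1] at h2
    exact absurd h2 (ne_of_gt (Fin.castSucc_lt_last _))
  subst hp
  have hτ : τ = τ' := by
    apply Equiv.ext; intro j
    have := congrArg (fun σ : Equiv.Perm (Fin (m+1)) => σ (p.succAbove j)) h
    simp only [ins_succAbove] at this
    exact Fin.castSucc_injective _ this
  rw [hτ]

lemma word_count (u v : ℕ → ℕ) (M m p : ℕ) (hp : p ≤ m) (huM : ∀ i, i < m → u i < M)
    (h1 : ∀ i, i < p → v i = u i) (h2 : v p = M) (h3 : ∀ i, p < i → i ≤ m → v i = u (i - 1)) :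
    ((range m).filter (fun i => v (i+1) < v i ∧ v i ∈ Xe)).card
      + (if 0 < p ∧ p < m ∧ (u p < u (p-1) ∧ u (p-1) ∈ Xe) then 1 else 0)
    = ((range (m-1)).filter (fun i => u (i+1) < u i ∧ u i ∈ Xe)).card
      + (if p < m ∧ M ∈ Xe then 1 else 0) := by
  classical
  set F : ℕ → ℕ := fun i => if (v (i+1) < v i ∧ v i ∈ Xe) then 1 else 0 with hF
  set G : ℕ → ℕ := fun i => if (u (i+1) < u i ∧ u i ∈ Xe) then 1 else 0 with hG
  have cF : ((range m).filter (fun i => v (i+1) < v i ∧ v i ∈ Xe)).card = ∑ i ∈ range m, F i := by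
    rw [Finset.card_filter]
  have cG : ((range (m-1)).filter (fun i => u (i+1) < u i ∧ u i ∈ Xe)).card
      = ∑ i ∈ range (m-1), G i := by
    rw [Finset.card_filter]
  rw [cF, cG]
  rcases Nat.eq_zero_or_pos m with hm | hm
  · subst hm
    have hp0 : p = 0 := by omega
    simp [hp0]
  rcases Nat.eq_zero_or_pos p with hp0 | hp1
  · -- p = 0
    subst hp0
    obtain ⟨m', rfl⟩ : ∃ m', m = m' + 1 := ⟨m - 1, by omega⟩
    rw [Finset.sum_range_succ']
    have e0 : F 0 = if (0 < m' + 1 ∧ M ∈ Xe) then 1 else 0 := by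
      simp only [hF, show (0:ℕ)+1 = 1 from rfl]
      have : v 1 = u 0 := h3 1 (by omega) (by omega)
      rw [this, h2]
      have : u 0 < M := huM 0 (by omega)
      refine if_congr ⟨?_, ?_⟩ rfl rfl
      · rintro ⟨-, hx⟩; exact ⟨by omega, hx⟩
      · rintro ⟨-, hx⟩; exact ⟨this, hx⟩
    have eshift : ∀ i ∈ range m', F (i + 1) = G i := by
      intro i hi
      simp only [Finset.mem_range] at hi
      simp only [hF, hG]
      have e1 : v (i+1) = u i := by rw [h3 (i+1) (by omega) (by omega)]; simp
      have e2 : v (i+2) = u (i+1) := by rw [h3 (i+2) (by omega) (by omega)]; simp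
      simp only [e1]
      rw [show i + 1 + 1 = i + 2 by omega, e2]
    rw [Finset.sum_congr rfl eshift, e0]
    simp
  · -- 1 ≤ p
    obtain ⟨q, rfl⟩ : ∃ q, p = q + 1 := ⟨p - 1, by omega⟩
    have hsplit : ∑ i ∈ range m, F i
        = ∑ i ∈ range (q+1), F i + ∑ i ∈ Ico (q+1) m, F i := by
      rw [Finset.sum_range_add_sum_Ico _ hp]
    have hFq : F q = 0 := by
      simp only [hF]
      have e1 : v q = u q := h1 q (by omega)
      have e2 : v (q+1) = M := h2
      simp only [e1, e2]
      have : u q < M := huM q (by omega)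
      simp only [ite_eq_right_iff]
      intro hcon; omega
    have hlow : ∀ i ∈ range q, F i = G i := by
      intro i hi
      simp only [Finset.mem_range] at hi
      simp only [hF, hG, h1 i (by omega), h1 (i+1) (by omega)]
    have hsum1 : ∑ i ∈ range (q+1), F i = ∑ i ∈ range q, G i := by
      rw [Finset.sum_range_succ, hFq, Finset.sum_congr rfl hlow]; ring
    rcases Nat.lt_or_ge (q+1) m with hlt | hge
    · -- q+1 < m
      have hbot : ∑ i ∈ Ico (q+1) m, F i = F (q+1) + ∑ i ∈ Ico (q+2) m, F i := by
        rw [Finset.sum_eq_sum_Ico_succ_bot hlt]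
      have hFp : F (q+1) = if ((q+1) < m ∧ M ∈ Xe) then 1 else 0 := by
        simp only [hF, show q+1+1 = q+2 from rfl]
        have e1 : v (q+1) = M := h2
        have e2 : v (q+2) = u (q+1) := by rw [h3 (q+2) (by omega) (by omega)]; simp
        rw [e2, e1]
        have : u (q+1) < M := huM (q+1) (by omega)
        refine if_congr ⟨?_, ?_⟩ rfl rfl
        · rintro ⟨-, hx⟩; exact ⟨hlt, hx⟩
        · rintro ⟨-, hx⟩; exact ⟨this, hx⟩
      have hhigh : ∑ i ∈ Ico (q+2) m, F i = ∑ i ∈ Ico (q+1) (m-1), G i := by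
        rw [Finset.sum_Ico_eq_sum_range, Finset.sum_Ico_eq_sum_range]
        rw [show m - 1 - (q + 1) = m - (q+2) by omega]
        apply Finset.sum_congr rfl
        intro i hi
        simp only [Finset.mem_range] at hi
        simp only [hF, hG]
        have e1 : v (q+2+i) = u (q+1+i) := by
          rw [h3 (q+2+i) (by omega) (by omega)]
          congr 1; omega
        have e2 : v (q+2+i+1) = u (q+1+i+1) := by
          rw [h3 (q+2+i+1) (by omega) (by omega)]
          congr 1; omega
        rw [e1, e2]
      have hG' : ∑ i ∈ range (m-1), G i
          = ∑ i ∈ range q, G i + G q + ∑ i ∈ Ico (q+1) (m-1), G i := by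
        rw [← Finset.sum_range_add_sum_Ico G (show q+1 ≤ m-1 by omega), Finset.sum_range_succ]
      have hbrk : (if (0 < q+1 ∧ q+1 < m ∧ (u (q+1) < u (q+1-1) ∧ u (q+1-1) ∈ Xe)) then 1 else 0)
          = G q := by
        rw [hG]
        simp only [show q + 1 - 1 = q by omega]
        have : (0 < q+1 ∧ q+1 < m ∧ (u (q+1) < u q ∧ u q ∈ Xe)) ↔ (u (q+1) < u q ∧ u q ∈ Xe) := by
          constructor
          · rintro ⟨-, -, hx⟩; exact hx
          · intro hx; exact ⟨by omega, hlt, hx⟩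
        rw [if_congr this rfl rfl]
      rw [hsplit, hsum1, hbot, hFp, hhigh, hG', hbrk]
      ring
    · -- q + 1 = m
      have hqm : q + 1 = m := by omega
      have hempty : ∑ i ∈ Ico (q+1) m, F i = 0 := by
        rw [show Finset.Ico (q+1) m = ∅ by rw [Finset.Ico_eq_empty_iff]; omega]; simp
      rw [hsplit, hsum1, hempty]
      rw [show m - 1 = q by omega]
      have c1 : (if (0 < q+1 ∧ q+1 < m ∧ (u (q+1) < u (q+1-1) ∧ u (q+1-1) ∈ Xe)) then 1 else 0) = 0 := by
        rw [if_neg]; rintro ⟨-, hc, -⟩; omega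
      have c2 : (if (q+1 < m ∧ M ∈ Xe) then 1 else 0) = 0 := by
        rw [if_neg]; rintro ⟨hc, -⟩; omega
      rw [c1, c2]

noncomputable def pword {m : ℕ} (τ : Equiv.Perm (Fin m)) : ℕ → ℕ :=
  fun i => if h : i < m then (τ ⟨i, h⟩ : ℕ) + 1 else 0

noncomputable def Dm {m : ℕ} (τ : Equiv.Perm (Fin m)) : ℕ :=
  desXY Xe Set.univ (fun i => (τ i : ℕ) + 1)

lemma Dm_eq {m : ℕ} (τ : Equiv.Perm (Fin m)) :
    Dm τ = ((range (m-1)).filter (fun i => pword τ (i+1) < pword τ i ∧ pword τ i ∈ Xe)).card := by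
  apply desXY_card
  intro i h
  simp [pword, h]

lemma Dm_le {m : ℕ} (τ : Equiv.Perm (Fin m)) : Dm τ ≤ m - 1 := by
  rw [Dm_eq]
  calc _ ≤ (range (m-1)).card := Finset.card_filter_le _ _
    _ = m - 1 := Finset.card_range _

/-- the break predicate -/
def Bp {m : ℕ} (τ : Equiv.Perm (Fin m)) (p : Fin (m+1)) : Prop :=
  0 < p.1 ∧ p.1 < m ∧ (pword τ p.1 < pword τ (p.1 - 1) ∧ pword τ (p.1 - 1) ∈ Xe)

lemma D_ins {m : ℕ} (p : Fin (m+1)) (τ : Equiv.Perm (Fin m)) :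
    Dm (ins p τ) + (if Bp τ p then 1 else 0)
      = Dm τ + (if p.1 < m ∧ ((m+1 : ℕ) ∈ Xe) then 1 else 0) := by
  have hins : Dm (ins p τ) = ((range m).filter
      (fun i => pword (ins p τ) (i+1) < pword (ins p τ) i ∧ pword (ins p τ) i ∈ Xe)).card := by
    rw [Dm_eq]; norm_num
  rw [hins, Dm_eq τ]
  unfold Bp
  convert word_count (pword τ) (pword (ins p τ)) (m+1) m p.1 (by omega) ?_ ?_ ?_ ?_ using 2
  · congr!
  · intro i hi
    simp only [pword, dif_pos hi]
    have := (τ ⟨i, hi⟩).isLt; omega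
  · intro i hi
    have him : i < m + 1 := by omega
    have him' : i < m := by have := p.isLt; omega
    simp only [pword, dif_pos him, dif_pos him']
    rw [ins_lt p τ ⟨i, him⟩ (by simpa using hi) (by simpa using him')]
  · simp only [pword, dif_pos p.isLt]
    have : ins p τ ⟨p.1, p.isLt⟩ = Fin.last m := by
      have : (⟨p.1, p.isLt⟩ : Fin (m+1)) = p := by exact Fin.ext rfl
      rw [this]; exact ins_at p τ
    rw [this]; simp [Fin.last]
  · intro i hpi him
    have him1 : i < m + 1 := by omega
    have him2 : i - 1 < m := by omega
    simp only [pword, dif_pos him1, dif_pos him2]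
    rw [ins_gt p τ ⟨i, him1⟩ (by simpa using hpi) (by simpa using him2)]

lemma card_brk {m : ℕ} (τ : Equiv.Perm (Fin m)) :
    (Finset.univ.filter (fun p : Fin (m+1) => Bp τ p)).card = Dm τ := by
  rw [Dm_eq]
  apply Finset.card_bij (fun (p : Fin (m+1)) _ => p.1 - 1)
  · intro p hp
    simp only [Finset.mem_filter, Finset.mem_univ, true_and] at hp
    obtain ⟨h0, hm, hd⟩ := hp
    simp only [Finset.mem_filter, Finset.mem_range]
    refine ⟨by omega, ?_⟩
    rw [show p.1 - 1 + 1 = p.1 by omega]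
    exact hd
  · intro a ha b hb hab
    simp only [Finset.mem_filter, Finset.mem_univ, true_and] at ha hb
    obtain ⟨ha1, ha2, -⟩ := ha
    obtain ⟨hb1', hb2', -⟩ := hb
    exact Fin.ext (by omega)
  · intro b hb
    simp only [Finset.mem_filter, Finset.mem_range] at hb
    obtain ⟨hb1, hd⟩ := hb
    refine ⟨⟨b+1, by omega⟩, ?_, by simp⟩
    simp only [Finset.mem_filter, Finset.mem_univ, true_and]
    exact ⟨Nat.succ_pos b, show b + 1 < m by omega, hd⟩

lemma card_topOr {m : ℕ} (τ : Equiv.Perm (Fin m)) :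
    (Finset.univ.filter (fun p : Fin (m+1) => p.1 = m ∨ Bp τ p)).card = Dm τ + 1 := by
  rw [Finset.filter_or, Finset.card_union_of_disjoint]
  · have h1 : (Finset.univ.filter (fun p : Fin (m+1) => p.1 = m)) = {Fin.last m} := by
      ext z
      simp only [Finset.mem_filter, Finset.mem_univ, true_and, Finset.mem_singleton]
      constructor
      · intro h; exact Fin.ext (by simpa using h)
      · intro h; subst h; rfl
    rw [h1, card_brk, Finset.card_singleton]
    omega
  · rw [Finset.disjoint_filter]
    intro p _ hpm hBp
    exact absurd hpm (by have := hBp.2.1; omega)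

lemma key_even {m : ℕ} (hm : 2 ∣ (m+1)) (p : Fin (m+1)) (τ : Equiv.Perm (Fin m)) :
    Dm (ins p τ) = if (p.1 = m ∨ Bp τ p) then Dm τ else Dm τ + 1 := by
  have hd := D_ins p τ
  have hXe : ((m+1 : ℕ) ∈ Xe) := ⟨by omega, hm⟩
  by_cases h1 : p.1 = m
  · rw [if_pos (Or.inl h1)]
    rw [if_neg (show ¬ Bp τ p from by rintro ⟨-, hc, -⟩; omega),
      if_neg (show ¬(p.1 < m ∧ ((m+1:ℕ) ∈ Xe)) from by rintro ⟨hc, -⟩; omega)] at hd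
    omega
  · have hpm : p.1 < m := by have := p.isLt; omega
    rw [if_pos (show p.1 < m ∧ ((m+1:ℕ) ∈ Xe) from ⟨hpm, hXe⟩)] at hd
    by_cases hb : Bp τ p
    · rw [if_pos (Or.inr hb)]
      rw [if_pos hb] at hd
      omega
    · rw [if_neg (show ¬(p.1 = m ∨ Bp τ p) from by rintro (hc | hc); exact h1 hc; exact hb hc)]
      rw [if_neg hb] at hd
      omega

lemma key_odd {m : ℕ} (hm : ¬ (2 ∣ (m+1))) (p : Fin (m+1)) (τ : Equiv.Perm (Fin m)) :
    Dm (ins p τ) + (if Bp τ p then 1 else 0) = Dm τ := by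
  have hd := D_ins p τ
  rw [if_neg (show ¬(p.1 < m ∧ ((m+1:ℕ) ∈ Xe)) from by rintro ⟨-, -, hc⟩; exact hm hc)] at hd
  simpa using hd

lemma fiber_even {m : ℕ} (hm : 2 ∣ (m+1)) (τ : Equiv.Perm (Fin m)) (s : ℕ) :
    (Finset.univ.filter (fun p : Fin (m+1) => Dm (ins p τ) = s)).card
      = (if s = Dm τ then Dm τ + 1 else 0) + (if s = Dm τ + 1 then m - Dm τ else 0) := by
  have hcards := Finset.card_filter_add_card_filter_not
    (s := (Finset.univ : Finset (Fin (m+1)))) (p := fun p => p.1 = m ∨ Bp τ p)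
  rw [card_topOr, Finset.card_univ, Fintype.card_fin] at hcards
  have hDle := Dm_le τ
  by_cases hs1 : s = Dm τ
  · have he : (Finset.univ.filter (fun p : Fin (m+1) => Dm (ins p τ) = s))
        = (Finset.univ.filter (fun p : Fin (m+1) => p.1 = m ∨ Bp τ p)) := by
      apply Finset.filter_congr
      intro p _
      rw [key_even hm p τ, hs1]
      by_cases hc : (p.1 = m ∨ Bp τ p)
      · rw [if_pos hc]; exact iff_of_true rfl hc
      · rw [if_neg hc]; exact iff_of_false (by omega) hc
    rw [he, card_topOr, if_pos hs1, if_neg (show ¬(s = Dm τ + 1) by omega)]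
  · by_cases hs2 : s = Dm τ + 1
    · have he : (Finset.univ.filter (fun p : Fin (m+1) => Dm (ins p τ) = s))
          = (Finset.univ.filter (fun p : Fin (m+1) => ¬(p.1 = m ∨ Bp τ p))) := by
        apply Finset.filter_congr
        intro p _
        rw [key_even hm p τ, hs2]
        by_cases hc : (p.1 = m ∨ Bp τ p)
        · rw [if_pos hc]; exact iff_of_false (by omega) (not_not_intro hc)
        · rw [if_neg hc]; exact iff_of_true rfl hc
      rw [he, if_neg hs1, if_pos hs2]
      omega
    · have he : (Finset.univ.filter (fun p : Fin (m+1) => Dm (ins p τ) = s)) = ∅ := by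
        apply Finset.filter_false_of_mem
        intro p _
        rw [key_even hm p τ]
        by_cases hc : (p.1 = m ∨ Bp τ p)
        · rw [if_pos hc]; omega
        · rw [if_neg hc]; omega
      rw [he, Finset.card_empty, if_neg hs1, if_neg hs2]

lemma fiber_odd {m : ℕ} (hm : ¬ (2 ∣ (m+1))) (τ : Equiv.Perm (Fin m)) (s : ℕ) :
    (Finset.univ.filter (fun p : Fin (m+1) => Dm (ins p τ) = s)).card
      = (if s = Dm τ then (m+1) - Dm τ else 0) + (if s + 1 = Dm τ then Dm τ else 0) := by
  have hcards := Finset.card_filter_add_card_filter_not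
    (s := (Finset.univ : Finset (Fin (m+1)))) (p := fun p => Bp τ p)
  rw [card_brk, Finset.card_univ, Fintype.card_fin] at hcards
  have hDle := Dm_le τ
  by_cases hs1 : s = Dm τ
  · have he : (Finset.univ.filter (fun p : Fin (m+1) => Dm (ins p τ) = s))
        = (Finset.univ.filter (fun p : Fin (m+1) => ¬ Bp τ p)) := by
      apply Finset.filter_congr
      intro p _
      have hk := key_odd hm p τ
      by_cases hc : Bp τ p
      · rw [if_pos hc] at hk
        exact iff_of_false (by omega) (not_not_intro hc)
      · rw [if_neg hc] at hk
        exact iff_of_true (by omega) hc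
    rw [he, if_pos hs1, if_neg (show ¬(s + 1 = Dm τ) by omega)]
    omega
  · by_cases hs2 : s + 1 = Dm τ
    · have he : (Finset.univ.filter (fun p : Fin (m+1) => Dm (ins p τ) = s))
          = (Finset.univ.filter (fun p : Fin (m+1) => Bp τ p)) := by
        apply Finset.filter_congr
        intro p _
        have hk := key_odd hm p τ
        by_cases hc : Bp τ p
        · rw [if_pos hc] at hk
          exact iff_of_true (by omega) hc
        · rw [if_neg hc] at hk
          exact iff_of_false (by omega) hc
      rw [he, card_brk, if_neg hs1, if_pos hs2]
      omega
    · have he : (Finset.univ.filter (fun p : Fin (m+1) => Dm (ins p τ) = s)) = ∅ := by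
        apply Finset.filter_false_of_mem
        intro p _
        have hk := key_odd hm p τ
        by_cases hc : Bp τ p
        · rw [if_pos hc] at hk; omega
        · rw [if_neg hc] at hk; omega
      rw [he, Finset.card_empty, if_neg hs1, if_neg hs2]

lemma count_eq (m s : ℕ) :
    (Finset.univ.filter (fun τ : Equiv.Perm (Fin m) => Dm τ = s)).card
      = permCount Xe Set.univ m s := rfl

lemma sum_ite_Dm (m s c : ℕ) :
    (∑ τ : Equiv.Perm (Fin m), (if Dm τ = s then c else 0))
      = c * permCount Xe Set.univ m s := by
  rw [← Finset.sum_filter, Finset.sum_const, smul_eq_mul, count_eq, mul_comm]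

lemma ins_bijective (m : ℕ) : Function.Bijective
    (fun tp : Equiv.Perm (Fin m) × Fin (m+1) => ins tp.2 tp.1) := by
  rw [Fintype.bijective_iff_injective_and_card]
  constructor
  · intro a b h
    have := ins_injective m (a₁ := (a.2, a.1)) (a₂ := (b.2, b.1)) h
    have h1 : a.2 = b.2 := congrArg Prod.fst this
    have h2 : a.1 = b.1 := congrArg Prod.snd this
    exact Prod.ext h2 h1
  · simp only [Fintype.card_prod, Fintype.card_perm, Fintype.card_fin]
    rw [Nat.factorial_succ]
    ring

lemma Q_succ (m s : ℕ) :
    permCount Xe Set.univ (m+1) s = ∑ τ : Equiv.Perm (Fin m),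
      (Finset.univ.filter (fun p : Fin (m+1) => Dm (ins p τ) = s)).card := by
  have h1 : permCount Xe Set.univ (m+1) s
      = ∑ σ : Equiv.Perm (Fin (m+1)), (if Dm σ = s then 1 else 0) := by
    rw [← count_eq, Finset.card_filter]
  rw [h1]
  have h2 : ∀ τ : Equiv.Perm (Fin m),
      (Finset.univ.filter (fun p : Fin (m+1) => Dm (ins p τ) = s)).card
      = ∑ p : Fin (m+1), (if Dm (ins p τ) = s then 1 else 0) := by
    intro τ; rw [Finset.card_filter]
  rw [Finset.sum_congr rfl (fun τ _ => h2 τ)]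
  refine Eq.trans ?_ (Fintype.sum_prod_type
    (f := fun tp : (Equiv.Perm (Fin m)) × Fin (m+1) => if Dm (ins tp.2 tp.1) = s then 1 else 0))
  exact (Fintype.sum_bijective _ (ins_bijective m)
    (fun tp => if Dm (ins tp.2 tp.1) = s then 1 else 0)
    (fun σ => if Dm σ = s then 1 else 0) (fun tp => rfl)).symm

lemma rec_even_zero (m : ℕ) (hm : 2 ∣ (m+1)) :
    permCount Xe Set.univ (m+1) 0 = permCount Xe Set.univ m 0 := by
  rw [Q_succ]
  have step : ∀ τ : Equiv.Perm (Fin m),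
      (Finset.univ.filter (fun p : Fin (m+1) => Dm (ins p τ) = 0)).card
      = if Dm τ = 0 then 1 else 0 := by
    intro τ
    rw [fiber_even hm τ 0]
    by_cases h : Dm τ = 0
    · rw [if_pos (by omega), if_neg (by omega), if_pos h]; omega
    · rw [if_neg (by omega), if_neg (by omega), if_neg h]
  rw [Finset.sum_congr rfl (fun τ _ => step τ), sum_ite_Dm, one_mul]

lemma rec_even_succ (m s : ℕ) (hm : 2 ∣ (m+1)) :
    permCount Xe Set.univ (m+1) (s+1)
      = (s+2) * permCount Xe Set.univ m (s+1) + (m - s) * permCount Xe Set.univ m s := by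
  rw [Q_succ]
  have step : ∀ τ : Equiv.Perm (Fin m),
      (Finset.univ.filter (fun p : Fin (m+1) => Dm (ins p τ) = s+1)).card
      = (if Dm τ = s+1 then s+2 else 0) + (if Dm τ = s then m - s else 0) := by
    intro τ
    rw [fiber_even hm τ (s+1)]
    congr 1
    · by_cases h : Dm τ = s+1
      · rw [if_pos (by omega), if_pos h]; omega
      · rw [if_neg (by omega), if_neg h]
    · by_cases h : Dm τ = s
      · rw [if_pos (by omega), if_pos h, h]
      · rw [if_neg (by omega), if_neg h]
  rw [Finset.sum_congr rfl (fun τ _ => step τ), Finset.sum_add_distrib, sum_ite_Dm, sum_ite_Dm]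

lemma rec_odd (m s : ℕ) (hm : ¬ (2 ∣ (m+1))) :
    permCount Xe Set.univ (m+1) s
      = ((m+1) - s) * permCount Xe Set.univ m s + (s+1) * permCount Xe Set.univ m (s+1) := by
  rw [Q_succ]
  have step : ∀ τ : Equiv.Perm (Fin m),
      (Finset.univ.filter (fun p : Fin (m+1) => Dm (ins p τ) = s)).card
      = (if Dm τ = s then (m+1) - s else 0) + (if Dm τ = s+1 then s+1 else 0) := by
    intro τ
    rw [fiber_odd hm τ s]
    congr 1
    · by_cases h : Dm τ = s
      · rw [if_pos (by omega), if_pos h, h]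
      · rw [if_neg (by omega), if_neg h]
    · by_cases h : Dm τ = s+1
      · rw [if_pos (by omega), if_pos h]; omega
      · rw [if_neg (by omega), if_neg h]
  rw [Finset.sum_congr rfl (fun τ _ => step τ), Finset.sum_add_distrib, sum_ite_Dm, sum_ite_Dm]

lemma alg (n s : ℕ) :
    (s+2)*((2*n - s)*(Nat.choose n (s+1))^2 + (s+2)*(Nat.choose n (s+2))^2)
      + (2*n+1-s)*((2*n+1-s)*(Nat.choose n s)^2 + (s+1)*(Nat.choose n (s+1))^2)
    = (n+1)^2*(Nat.choose (n+1) (s+1))^2 := by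
  rcases Nat.lt_or_ge n s with hlt | hge
  · rw [Nat.choose_eq_zero_of_lt hlt, Nat.choose_eq_zero_of_lt (by omega),
      Nat.choose_eq_zero_of_lt (by omega), Nat.choose_eq_zero_of_lt (by omega)]
    ring
  · rcases Nat.eq_or_lt_of_le hge with heq | hlt2
    · subst heq
      rw [Nat.choose_self, Nat.choose_eq_zero_of_lt (by omega),
        Nat.choose_eq_zero_of_lt (by omega), Nat.choose_self,
        show 2*s+1-s = s+1 by omega]
      ring
    · obtain ⟨e, rfl⟩ : ∃ e, n = s + e + 1 := ⟨n - s - 1, by omega⟩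
      have hb : (Nat.choose (s+e+1) (s+1))*(s+1) = (Nat.choose (s+e+1) s)*(e+1) := by
        have := Nat.choose_succ_right_eq (s+e+1) s
        rwa [show s+e+1-s = e+1 by omega] at this
      have hc : (Nat.choose (s+e+1) (s+2))*(s+2) = (Nat.choose (s+e+1) (s+1))*e := by
        have := Nat.choose_succ_right_eq (s+e+1) (s+1)
        rwa [show s+e+1-(s+1) = e by omega] at this
      have hcc : (Nat.choose (s+e+1) (s+2))*(s+2)*(s+1)
          = (Nat.choose (s+e+1) s)*(e+1)*e := by
        calc (Nat.choose (s+e+1) (s+2))*(s+2)*(s+1)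
            = (Nat.choose (s+e+1) (s+1))*e*(s+1) := by rw [hc]
          _ = (Nat.choose (s+e+1) (s+1))*(s+1)*e := by ring
          _ = (Nat.choose (s+e+1) s)*(e+1)*e := by rw [hb]
      have hd : (s+e+2)*(Nat.choose (s+e+1) s) = (Nat.choose (s+e+2) (s+1))*(s+1) := by
        have := Nat.add_one_mul_choose_eq (s+e+1) s
        rwa [show s+e+1+1 = s+e+2 by omega] at this
      rw [show 2*(s+e+1) - s = s+2*e+2 by omega, show 2*(s+e+1)+1 - s = s+2*e+3 by omega,
        show s+e+1+1 = s+e+2 by omega]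
      apply Nat.eq_of_mul_eq_mul_right (show 0 < ((s+1)*(s+2))^2 by positivity)
      calc ((s+2)*((s+2*e+2)*(Nat.choose (s+e+1) (s+1))^2 + (s+2)*(Nat.choose (s+e+1) (s+2))^2)
            + (s+2*e+3)*((s+2*e+3)*(Nat.choose (s+e+1) s)^2 + (s+1)*(Nat.choose (s+e+1) (s+1))^2))
            * ((s+1)*(s+2))^2
          = ((s+2)*(s+2*e+2) + (s+2*e+3)*(s+1))*(s+2)^2*((Nat.choose (s+e+1) (s+1))*(s+1))^2
            + (s+2)^2*((Nat.choose (s+e+1) (s+2))*(s+2)*(s+1))^2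
            + (s+2*e+3)^2*(s+1)^2*(s+2)^2*(Nat.choose (s+e+1) s)^2 := by ring
        _ = ((s+2)*(s+2*e+2) + (s+2*e+3)*(s+1))*(s+2)^2*((Nat.choose (s+e+1) s)*(e+1))^2
            + (s+2)^2*((Nat.choose (s+e+1) s)*(e+1)*e)^2
            + (s+2*e+3)^2*(s+1)^2*(s+2)^2*(Nat.choose (s+e+1) s)^2 := by rw [hb, hcc]
        _ = (s+e+2)^2*(s+2)^2*((s+e+2)*(Nat.choose (s+e+1) s))^2 := by ring
        _ = (s+e+2)^2*(s+2)^2*((Nat.choose (s+e+2) (s+1))*(s+1))^2 := by rw [hd]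
        _ = (s+e+2)^2*(Nat.choose (s+e+2) (s+1))^2 * ((s+1)*(s+2))^2 := by ring

lemma Qzero (s : ℕ) : permCount Xe Set.univ 0 s
    = (Nat.factorial 0)^2 * (Nat.choose 0 s)^2 := by
  have hD : ∀ σ : Equiv.Perm (Fin 0), desXY Xe Set.univ (fun i => (σ i : ℕ) + 1) = 0 := by
    intro σ
    unfold desXY
    simp
  cases s with
  | zero =>
    rw [permCount]
    rw [Finset.filter_true_of_mem (fun σ _ => hD σ)]
    simp [Finset.card_univ]
  | succ s =>
    rw [permCount]
    rw [Finset.filter_false_of_mem (fun σ _ => by rw [hD σ]; omega)]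
    simp [Nat.choose_eq_zero_of_lt]

lemma Qmain : ∀ n s : ℕ, permCount Xe Set.univ (2*n) s
    = (Nat.factorial n)^2 * (Nat.choose n s)^2 := by
  intro n
  induction n with
  | zero =>
    intro s
    rw [show 2*0 = 0 by rfl]
    exact Qzero s
  | succ n ih =>
    intro s
    have hodd : ¬ (2 ∣ (2*n+1)) := by omega
    have heven : (2 : ℕ) ∣ ((2*n+1)+1) := by omega
    have ho : ∀ t : ℕ, permCount Xe Set.univ (2*n+1) t
        = (2*n+1-t) * permCount Xe Set.univ (2*n) t
          + (t+1) * permCount Xe Set.univ (2*n) (t+1) := by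
      intro t
      exact rec_odd (2*n) t hodd
    rw [show 2*(n+1) = (2*n+1)+1 by ring]
    cases s with
    | zero =>
      rw [rec_even_zero _ heven, ho 0, ih 0, ih 1]
      rw [Nat.choose_zero_right, Nat.choose_one_right, Nat.choose_zero_right,
        Nat.factorial_succ, Nat.sub_zero]
      ring
    | succ s =>
      rw [rec_even_succ _ _ heven, ho (s+1), ho s, ih s, ih (s+1), ih (s+2)]
      rw [show 2*n+1-(s+1) = 2*n-s by omega, Nat.factorial_succ]
      calc (s+2) * ((2*n-s) * ((Nat.factorial n)^2 * (Nat.choose n (s+1))^2)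
              + (s+1+1) * ((Nat.factorial n)^2 * (Nat.choose n (s+2))^2))
            + (2*n+1-s) * ((2*n+1-s) * ((Nat.factorial n)^2 * (Nat.choose n s)^2)
              + (s+1) * ((Nat.factorial n)^2 * (Nat.choose n (s+1))^2))
          = (Nat.factorial n)^2 * ((s+2)*((2*n - s)*(Nat.choose n (s+1))^2
              + (s+2)*(Nat.choose n (s+2))^2)
            + (2*n+1-s)*((2*n+1-s)*(Nat.choose n s)^2 + (s+1)*(Nat.choose n (s+1))^2)) := by
            ring
        _ = (Nat.factorial n)^2 * ((n+1)^2*(Nat.choose (n+1) (s+1))^2) := by rw [alg n s]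
        _ = ((n+1) * Nat.factorial n)^2 * (Nat.choose (n+1) (s+1))^2 := by ring

theorem stmt7 (n s : ℕ) (hn : 1 ≤ n) :
    permCount {x : ℕ | 0 < x ∧ 2 ∣ x} Set.univ (2 * n) s =
      (Nat.factorial n) ^ 2 * (Nat.choose n s) ^ 2 := by
  exact Qmain n s
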